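/- Let L be a graded subalgebra of a G-graded Lie algebra Q = ⊕_{σ∈G} Q_σ. If Q is an algebra of quotients of L (in the non-graded sense), then Q is a graded algebra of quotients of L. -/

import Mathlib

/-- The set of iterated adjoint actions of elements of the subalgebra `L` on `q`,
i.e. `q` together with all elements `ad x₁ ⋯ ad xₙ (q)` with `x₁, …, xₙ ∈ L`. -/
inductive AdOrbit {Φ : Type*} [CommRing Φ] {Q : Type*} [LieRing Q] [LieAlgebra Φ Q]
    (L : LieSubalgebra Φ Q) (q : Q) : Q → Prop
  | base : AdOrbit L q q
  | step (x : Q) (hx : x ∈ L) {y : Q} (hy : AdOrbit L q y) : AdOrbit L q ⁅x, y⁆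

/-- `_L(q)`: the `Φ`-linear span in `Q` of `q` together with all elements
`ad x₁ ⋯ ad xₙ (q)` with `x₁, …, xₙ ∈ L`. -/
def lSpan (Φ : Type*) [CommRing Φ] {Q : Type*} [LieRing Q] [LieAlgebra Φ Q]
    (L : LieSubalgebra Φ Q) (q : Q) : Submodule Φ Q :=
  Submodule.span Φ {y | AdOrbit L q y}

section Aux

variable {Φ : Type*} [CommRing Φ] {G : Type*} [CommGroup G] [DecidableEq G]
    {Q : Type*} [LieRing Q] [LieAlgebra Φ Q]

/-- `lSpan` is closed under `ad x` for `x ∈ L`. -/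
lemma lSpan_lie_mem (L : LieSubalgebra Φ Q) (q : Q) {w : Q} (hw : w ∈ L)
    {y : Q} (hy : y ∈ lSpan Φ L q) : ⁅w, y⁆ ∈ lSpan Φ L q := by
  induction hy using Submodule.span_induction with
  | mem z hz => exact Submodule.subset_span (AdOrbit.step w hw hz)
  | zero => simp
  | add a b _ _ ha hb =>
      rw [lie_add]; exact Submodule.add_mem _ ha hb
  | smul c a _ ha =>
      rw [lie_smul]; exact Submodule.smul_mem _ c ha

lemma my_lie_sum {ι : Type*} (s : Finset ι) (w : Q) (f : ι → Q) :
    ⁅w, ∑ i ∈ s, f i⁆ = ∑ i ∈ s, ⁅w, f i⁆ := by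
  induction s using Finset.cons_induction with
  | empty => simp
  | cons a s ha ih => simp [Finset.sum_cons, lie_add, ih]

variable (𝒜 : G → Submodule Φ Q) [DirectSum.Decomposition 𝒜]
    (hbracket : ∀ (σ τ : G) (x y : Q), x ∈ 𝒜 σ → y ∈ 𝒜 τ → ⁅x, y⁆ ∈ 𝒜 (σ * τ))

include hbracket in
/-- Decomposition of a bracket with a homogeneous element. -/
lemma decompose_lie_homog {β : G} {z : Q} (hz : z ∈ 𝒜 β) (w : Q) (α : G) :
    (DirectSum.decompose 𝒜 ⁅w, z⁆ (α * β) : Q) = ⁅(DirectSum.decompose 𝒜 w α : Q), z⁆ := by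
  induction w using DirectSum.Decomposition.inductionOn 𝒜 with
  | zero => simp
  | @homogeneous i m =>
      by_cases hi : i = α
      · subst hi
        rw [DirectSum.decompose_of_mem_same 𝒜 m.2,
          DirectSum.decompose_of_mem_same 𝒜 (hbracket _ _ _ _ m.2 hz)]
      · rw [DirectSum.decompose_of_mem_ne 𝒜 m.2 hi,
          DirectSum.decompose_of_mem_ne 𝒜 (hbracket _ _ _ _ m.2 hz)
            (fun h => hi (mul_right_cancel h)), zero_lie]
  | add a b ha hb =>
      simp only [add_lie, DirectSum.decompose_add, DirectSum.add_apply, Submodule.coe_add,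
        ha, hb]

include hbracket in
lemma adOrbit_decompose_mem (L : LieSubalgebra Φ Q)
    (hLgr : ∀ x ∈ L, ∀ σ : G, (DirectSum.decompose 𝒜 x σ : Q) ∈ L)
    {τ : G} {q : Q} (hq : q ∈ 𝒜 τ) {z : Q} (hz : AdOrbit L q z) :
    ∀ β : G, (DirectSum.decompose 𝒜 z β : Q) ∈ lSpan Φ L q := by
  classical
  induction hz with
  | base =>
      intro β
      by_cases hβ : τ = β
      · subst hβ; rw [DirectSum.decompose_of_mem_same 𝒜 hq]
        exact Submodule.subset_span AdOrbit.base
      · rw [DirectSum.decompose_of_mem_ne 𝒜 hq hβ]; exact Submodule.zero_mem _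
  | @step w hw z hz ih =>
      intro β
      have hsum : (DirectSum.decompose 𝒜 ⁅w, z⁆ β : Q) =
          ∑ β' ∈ (DirectSum.decompose 𝒜 z).support,
            (DirectSum.decompose 𝒜 ⁅w, (DirectSum.decompose 𝒜 z β' : Q)⁆ β : Q) := by
        conv_lhs => rw [← DirectSum.sum_support_decompose 𝒜 z]
        rw [my_lie_sum, DirectSum.decompose_sum, DFinsupp.finset_sum_apply,
          AddSubmonoidClass.coe_finset_sum]
      rw [hsum]
      refine Submodule.sum_mem _ fun β' _ => ?_
      have h1 : (DirectSum.decompose 𝒜 z β' : Q) ∈ 𝒜 β' := (DirectSum.decompose 𝒜 z β').2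
      have h2 := decompose_lie_homog 𝒜 hbracket h1 w (β * β'⁻¹)
      rw [inv_mul_cancel_right] at h2
      rw [h2]
      exact lSpan_lie_mem L q (hLgr w hw (β * β'⁻¹)) (ih β')

include hbracket in
/-- `lSpan` of a homogeneous element over a graded subalgebra is a graded submodule. -/
lemma lSpan_homog (L : LieSubalgebra Φ Q)
    (hLgr : ∀ x ∈ L, ∀ σ : G, (DirectSum.decompose 𝒜 x σ : Q) ∈ L)
    {τ : G} {q : Q} (hq : q ∈ 𝒜 τ) {y : Q} (hy : y ∈ lSpan Φ L q) (β : G) :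
    (DirectSum.decompose 𝒜 y β : Q) ∈ lSpan Φ L q := by
  classical
  induction hy using Submodule.span_induction with
  | mem z hz => exact adOrbit_decompose_mem 𝒜 hbracket L hLgr hq hz β
  | zero => simp
  | add a b _ _ ha hb =>
      rw [DirectSum.decompose_add, DirectSum.add_apply, Submodule.coe_add]
      exact Submodule.add_mem _ ha hb
  | smul c a _ ha =>
      rw [DirectSum.decompose_smul, DirectSum.smul_apply, Submodule.coe_smul]
      exact Submodule.smul_mem _ c ha

end Aux

/-- Let `L` be a graded subalgebra of a `G`-graded Lie algebra
`Q = ⊕_{σ∈G} Q_σ`.  If `Q` is an algebra of quotients of `L` (in the non-graded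
sense), then `Q` is a graded algebra of quotients of `L`. -/
theorem quotients_implies_graded_quotients
    {Φ : Type*} [CommRing Φ] {G : Type*} [CommGroup G] [DecidableEq G]
    {Q : Type*} [LieRing Q] [LieAlgebra Φ Q]
    (𝒜 : G → Submodule Φ Q) [DirectSum.Decomposition 𝒜]
    (hbracket : ∀ (σ τ : G) (x y : Q), x ∈ 𝒜 σ → y ∈ 𝒜 τ → ⁅x, y⁆ ∈ 𝒜 (σ * τ))
    (L : LieSubalgebra Φ Q)
    (hLgr : ∀ x ∈ L, ∀ σ : G, (DirectSum.decompose 𝒜 x σ : Q) ∈ L)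
    (hquot : ∀ p : Q, p ≠ 0 → ∀ q : Q,
      ∃ x ∈ L, ⁅x, p⁆ ≠ 0 ∧ ∀ y ∈ lSpan Φ L q, ⁅x, y⁆ ∈ L) :
    ∀ (σ τ : G) (p q : Q), p ∈ 𝒜 σ → p ≠ 0 → q ∈ 𝒜 τ →
      ∃ (α : G) (x : Q), x ∈ 𝒜 α ∧ x ∈ L ∧ ⁅x, p⁆ ≠ 0 ∧
        ∀ y ∈ lSpan Φ L q, ⁅x, y⁆ ∈ L := by
  classical
  intro σ τ p q hpσ hp hqτ
  obtain ⟨x, hxL, hxp, hxq⟩ := hquot p hp q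
  have hex : ∃ γ, (DirectSum.decompose 𝒜 ⁅x, p⁆ γ : Q) ≠ 0 := by
    by_contra h
    push_neg at h
    apply hxp
    rw [← DirectSum.sum_support_decompose 𝒜 ⁅x, p⁆]
    exact Finset.sum_eq_zero fun γ _ => h γ
  obtain ⟨γ, hγ⟩ := hex
  set α := γ * σ⁻¹ with hα
  have hασ : α * σ = γ := by rw [hα, inv_mul_cancel_right]
  have hkey := decompose_lie_homog 𝒜 hbracket hpσ x α
  rw [hασ] at hkey
  refine ⟨α, (DirectSum.decompose 𝒜 x α : Q), (DirectSum.decompose 𝒜 x α).2,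
    hLgr x hxL α, by rw [← hkey]; exact hγ, ?_⟩
  intro y hy
  have hysum : ⁅(DirectSum.decompose 𝒜 x α : Q), y⁆ =
      ∑ β ∈ (DirectSum.decompose 𝒜 y).support,
        ⁅(DirectSum.decompose 𝒜 x α : Q), (DirectSum.decompose 𝒜 y β : Q)⁆ := by
    conv_lhs => rw [← DirectSum.sum_support_decompose 𝒜 y]
    rw [my_lie_sum]
  rw [hysum]
  refine Submodule.sum_mem L.toSubmodule fun β _ => ?_
  have hyβ : (DirectSum.decompose 𝒜 y β : Q) ∈ lSpan Φ L q :=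
    lSpan_homog 𝒜 hbracket L hLgr hqτ hy β
  have h2 := decompose_lie_homog 𝒜 hbracket (DirectSum.decompose 𝒜 y β).2 x α
  rw [← h2]
  exact hLgr _ (hxq _ hyβ) (α * β)
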